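/- The intersection of the kernels of all annihilation operators a(v), v ∈ V, acting on the full antidual SV', is the complex line spanned by the functional ⟨·|1⟩ (evaluation against the vacuum). -/

import Mathlib

open scoped ComplexConjugate

noncomputable section

section Defs

variable {V W A : Type} [AddCommGroup V] [Module ℂ V] [CommRing A] [Algebra ℂ A]

/-- `A` (with embedding `ι`) is the symmetric algebra of `V`: universal property. -/
def IsSymmAlg (ι : V →ₗ[ℂ] A) : Prop :=
  ∀ (B : Type) [CommRing B] [Algebra ℂ B] (f : V →ₗ[ℂ] B),
    ∃! F : A →ₐ[ℂ] B, ∀ v, F (ι v) = f v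

/-- The span of `n`-fold products of generators: the degree-`n` part. -/
def GradeOf (gen : W → A) (n : ℕ) : Submodule ℂ A :=
  Submodule.span ℂ {a | ∃ f : Fin n → W, a = ∏ i, gen (f i)}

/-- The algebra is spanned by products of generators. -/
def SpanProdsOf (gen : W → A) : Prop :=
  ∀ x : A, x ∈ Submodule.span ℂ {a | ∃ (n : ℕ) (f : Fin n → W), a = ∏ i, gen (f i)}

/-- A quadratic: an antilinear functional concentrated in degree 2. -/
def IsQuadOf (gen : W → A) (ζ : A →ₗ⋆[ℂ] ℂ) : Prop :=
  ∀ n : ℕ, n ≠ 2 → ∀ φ ∈ GradeOf gen n, ζ φ = 0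

/-- The commutative product on the full antidual induced by the coproduct,
characterized on products of generators. -/
def IsConvProdOf (gen : W → A)
    (mul : (A →ₗ⋆[ℂ] ℂ) → (A →ₗ⋆[ℂ] ℂ) → (A →ₗ⋆[ℂ] ℂ)) : Prop :=
  ∀ (Φ Ψ : A →ₗ⋆[ℂ] ℂ) (n : ℕ) (v : Fin n → W),
    mul Φ Ψ (∏ i, gen (v i)) =
      ∑ S : Finset (Fin n), Φ (∏ i ∈ S, gen (v i)) * Ψ (∏ i ∈ Sᶜ, gen (v i))

/-- The counit (unit of the antidual algebra): kills products of at least one generator. -/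
def IsCounitOf (gen : W → A) (ε : A →ₗ⋆[ℂ] ℂ) : Prop :=
  ∀ (n : ℕ) (v : Fin n → W), ε (∏ i, gen (v i)) = if n = 0 then 1 else 0

/-- Powers of a functional with respect to the convolution product. -/
def powD (mul : (A →ₗ⋆[ℂ] ℂ) → (A →ₗ⋆[ℂ] ℂ) → (A →ₗ⋆[ℂ] ℂ))
    (ε ζ : A →ₗ⋆[ℂ] ℂ) : ℕ → (A →ₗ⋆[ℂ] ℂ)
  | 0 => ε
  | n + 1 => mul ζ (powD mul ε ζ n)

/-- `E` is the Gaussian `exp ζ = Σ ζⁿ/n!` (a finite sum in each degree). -/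
def IsGaussianOf (gen : W → A)
    (mul : (A →ₗ⋆[ℂ] ℂ) → (A →ₗ⋆[ℂ] ℂ) → (A →ₗ⋆[ℂ] ℂ))
    (ε ζ E : A →ₗ⋆[ℂ] ℂ) : Prop :=
  ∀ k : ℕ, ∀ ψ ∈ GradeOf gen k,
    E ψ = ∑ n ∈ Finset.range (k + 1), ((n.factorial : ℂ))⁻¹ * powD mul ε ζ n ψ

end Defs

section Defs2

variable {V A : Type} [NormedAddCommGroup V] [InnerProductSpace ℂ V]
  [CommRing A] [Algebra ℂ A]

/-- The family of annihilation operators: derivations killing `1` with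
`a v (ι w) = ⟨v|w⟩ 1`. -/
def IsAnn (ι : V →ₗ[ℂ] A) (a : V → A →ₗ[ℂ] A) : Prop :=
  ∀ v : V, (∀ x y : A, a v (x * y) = a v x * y + x * a v y) ∧
    a v 1 = 0 ∧ ∀ w : V, a v (ι w) = (inner ℂ v w : ℂ) • (1 : A)

/-- The canonical inner product on the symmetric algebra: graded pieces are
orthogonal and the permanent formula holds. (Antilinear in the first slot.) -/
def IsCanonInner (ι : V →ₗ[ℂ] A) (Bf : A →ₗ⋆[ℂ] A →ₗ[ℂ] ℂ) : Prop :=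
  (∀ (k n : ℕ), k ≠ n → ∀ (x : Fin k → V) (y : Fin n → V),
      Bf (∏ i, ι (x i)) (∏ i, ι (y i)) = 0) ∧
  ∀ (n : ℕ) (x y : Fin n → V),
      Bf (∏ i, ι (x i)) (∏ i, ι (y i)) =
        ∑ p : Equiv.Perm (Fin n), ∏ i, (inner ℂ (x i) (y (p i)) : ℂ)

/-- Iterated annihilation `a(vₙ)⋯a(v₁)φ` (applying `a(v₁)` first). -/
def iterAnn (a : V → A →ₗ[ℂ] A) : (n : ℕ) → (Fin n → V) → A → A
  | 0, _, φ => φ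
  | n + 1, v, φ => a (v (Fin.last n)) (iterAnn a n (fun i => v i.castSucc) φ)

/-- A symmetric bi-antilinear map `V × V → ℂ`. -/
def IsSymAnti (Z : V → V → ℂ) : Prop :=
  (∀ x y, Z x y = Z y x) ∧
  (∀ x y y', Z x (y + y') = Z x y + Z x y') ∧
  (∀ (c : ℂ) (x y : V), Z x (c • y) = conj c * Z x y)

end Defs2

/-- The intersection of the kernels of all annihilators `a(v)` on the full
antidual `SV'` is the complex line spanned by the vacuum functional `⟨·|1⟩`. -/
theorem annihilator_kernel_vacuum {V A : Type}
    [NormedAddCommGroup V] [InnerProductSpace ℂ V]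
    [CommRing A] [Algebra ℂ A] (ι : V →ₗ[ℂ] A) (hA : IsSymmAlg ι)
    (hspan : SpanProdsOf fun w => ι w)
    (ε : A →ₗ⋆[ℂ] ℂ) (hε : IsCounitOf (fun w => ι w) ε) :
    ∀ Φ : A →ₗ⋆[ℂ] ℂ,
      (∀ (v : V) (ψ : A), Φ (ι v * ψ) = 0) ↔ ∃ c : ℂ, Φ = c • ε := by
  intro Φ
  constructor
  · intro h
    refine ⟨Φ 1, ?_⟩
    have hker : ∀ x : A, (Φ - (Φ 1) • ε) x = 0 := by
      intro x
      have hx := hspan x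
      have hsub : Submodule.span ℂ {a : A | ∃ (n : ℕ) (f : Fin n → V), a = ∏ i, ι (f i)}
          ≤ LinearMap.ker (Φ - (Φ 1) • ε) := by
        rw [Submodule.span_le]
        rintro a ⟨n, f, rfl⟩
        simp only [SetLike.mem_coe, LinearMap.mem_ker, LinearMap.sub_apply,
          LinearMap.smul_apply, smul_eq_mul]
        cases n with
        | zero =>
          have h1 : ε (1 : A) = 1 := by simpa using hε 0 f
          simp [h1]
        | succ m =>
          have hεz : ε (∏ i : Fin (m+1), ι (f i)) = 0 := by simpa using hε (m+1) f
          have hΦz : Φ (∏ i : Fin (m+1), ι (f i)) = 0 := by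
            rw [Fin.prod_univ_succ]
            exact h (f 0) _
          rw [hεz, hΦz]; ring
      exact LinearMap.mem_ker.mp (hsub hx)
    ext x
    have hx := hker x
    rw [LinearMap.sub_apply, sub_eq_zero] at hx
    exact hx
  · rintro ⟨c, rfl⟩ v ψ
    have key : ε (ι v * ψ) = 0 := by
      have hsub : Submodule.span ℂ {a : A | ∃ (n : ℕ) (f : Fin n → V), a = ∏ i, ι (f i)}
          ≤ LinearMap.ker (ε.comp (LinearMap.mulLeft ℂ (ι v))) := by
        rw [Submodule.span_le]
        rintro a ⟨n, f, rfl⟩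
        simp only [SetLike.mem_coe, LinearMap.mem_ker, LinearMap.comp_apply,
          LinearMap.mulLeft_apply]
        have : ι v * ∏ i, ι (f i) = ∏ i : Fin (n+1), ι ((Fin.cons v f : Fin (n+1) → V) i) := by
          rw [Fin.prod_univ_succ]
          simp
        rw [this]
        simpa using hε (n+1) (Fin.cons v f : Fin (n+1) → V)
      have := hsub (hspan ψ)
      simpa using this
    simp [key]
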